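/- For n ≥ 2, the polynomial Q_n(x) = Σ_{k=0}^{n-2} ⟨n-1, k⟩ · x^{k+1} · (x-1)^{n-1-k} satisfies Q_n(x) = Σ_{k=1}^{n} (-1)^{n-k} · (k-1)! · {n, k} · x^k, where {n,k} is the Stirling number of the second kind. -/

import Mathlib

/-- Eulerian numbers `⟨n, k⟩`. -/
def eulerian : ℕ → ℕ → ℕ
  | 0, 0 => 1
  | 0, _ + 1 => 0
  | _ + 1, 0 => 1
  | n + 1, k + 1 => (k + 2) * eulerian n (k + 1) + (n - k) * eulerian n k

/-- Stirling numbers of the second kind. -/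
def stirlingSecond : ℕ → ℕ → ℕ
  | 0, 0 => 1
  | 0, _ + 1 => 0
  | _ + 1, 0 => 0
  | n + 1, k + 1 => (k + 1) * stirlingSecond n (k + 1) + stirlingSecond n k

lemma eulerian_zero_left : ∀ m, eulerian m 0 = 1
  | 0 => rfl
  | _ + 1 => rfl

lemma eulerian_of_lt : ∀ m k, m < k → eulerian m k = 0 := by
  intro m
  induction m with
  | zero => intro k hk; obtain ⟨k, rfl⟩ : ∃ k', k = k' + 1 := ⟨k - 1, by omega⟩; rfl
  | succ m ih =>
    intro k hk
    obtain ⟨k, rfl⟩ : ∃ k', k = k' + 1 := ⟨k - 1, by omega⟩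
    rw [eulerian, ih k (by omega), ih (k+1) (by omega)]
    ring

lemma eulerian_of_le (m k : ℕ) (h1 : 1 ≤ m) (h2 : m ≤ k) : eulerian m k = 0 := by
  rcases Nat.lt_or_ge m k with h | h
  · exact eulerian_of_lt m k h
  · have : m = k := le_antisymm h2 h
    subst this
    obtain ⟨m, rfl⟩ : ∃ m', m = m' + 1 := ⟨m - 1, by omega⟩
    rw [eulerian, eulerian_of_lt m (m+1) (by omega)]
    simp

lemma stirling_of_lt : ∀ n k, n < k → stirlingSecond n k = 0 := by
  intro n
  induction n with
  | zero => intro k hk; obtain ⟨k, rfl⟩ : ∃ k', k = k' + 1 := ⟨k - 1, by omega⟩; rfl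
  | succ n ih =>
    intro k hk
    obtain ⟨k, rfl⟩ : ∃ k', k = k' + 1 := ⟨k - 1, by omega⟩
    rw [stirlingSecond, ih k (by omega), ih (k+1) (by omega)]
    ring

lemma stirling_self : ∀ n, stirlingSecond n n = 1 := by
  intro n
  induction n with
  | zero => rfl
  | succ n ih =>
    rw [stirlingSecond, ih, stirling_of_lt n (n+1) (by omega)]
    ring

lemma sum_eulerian : ∀ m, ∑ k ∈ Finset.range (m+1), eulerian m k = m.factorial := by
  intro m
  induction m with
  | zero => rfl
  | succ m ih =>
    rw [Finset.sum_range_succ']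
    have h1 : ∀ j ∈ Finset.range (m+1), eulerian (m+1) (j+1)
        = (j+2) * eulerian m (j+1) + (m-j) * eulerian m j := fun j _ => rfl
    rw [Finset.sum_congr rfl h1, Finset.sum_add_distrib]
    have h2 : ∑ k ∈ Finset.range (m+2), (k+1) * eulerian m k
        = ∑ j ∈ Finset.range (m+1), (j+2) * eulerian m (j+1) + 1 := by
      rw [Finset.sum_range_succ' (fun k => (k+1) * eulerian m k) (m+1)]
      simp [eulerian_zero_left]
    have h3 : ∑ k ∈ Finset.range (m+2), (k+1) * eulerian m k
        = ∑ k ∈ Finset.range (m+1), (k+1) * eulerian m k := by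
      rw [Finset.sum_range_succ, eulerian_of_lt m (m+1) (by omega)]
      simp
    have h5 : ∑ k ∈ Finset.range (m+1), (k+1) * eulerian m k
        + ∑ j ∈ Finset.range (m+1), (m-j) * eulerian m j
        = (m+1) * ∑ k ∈ Finset.range (m+1), eulerian m k := by
      rw [Finset.mul_sum, ← Finset.sum_add_distrib]
      apply Finset.sum_congr rfl
      intro k hk
      have hk' : k ≤ m := by simpa using Nat.lt_succ_iff.mp (Finset.mem_range.mp hk)
      have : (k+1) + (m-k) = m+1 := by omega
      calc (k+1) * eulerian m k + (m-k) * eulerian m k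
          = ((k+1) + (m-k)) * eulerian m k := by ring
        _ = (m+1) * eulerian m k := by rw [this]
    rw [Nat.factorial_succ, ← ih, eulerian_zero_left]
    omega

lemma choose_term (m k s t : ℕ) (hk : k ≤ m) (hs : s = t + 1) :
    (k+1) * ((m+1-k).choose s) + (m-k) * ((m-k).choose s) + s * ((m-k).choose s)
      = (m+1) * ((m-k).choose s) + (m+2-s) * ((m-k).choose t) := by
  subst hs
  obtain ⟨a, rfl⟩ : ∃ a, m = k + a := ⟨m - k, by omega⟩
  have h1 : k + a + 1 - k = a + 1 := by omega
  have h2 : k + a - k = a := by omega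
  rw [h1, h2]
  rcases Nat.lt_or_ge a t with h | h
  · have e0 : a.choose t = 0 := Nat.choose_eq_zero_of_lt h
    have e1 : a.choose (t+1) = 0 := Nat.choose_eq_zero_of_lt (by omega)
    have e2 : (a+1).choose (t+1) = 0 := Nat.choose_eq_zero_of_lt (by omega)
    rw [e0, e1, e2]
    ring
  · obtain ⟨d, rfl⟩ : ∃ d, a = t + d := ⟨a - t, by omega⟩
    have csr := Nat.choose_succ_right_eq (t + d) t
    have h3 : t + d - t = d := by omega
    rw [h3] at csr
    have h4 : k + (t+d) + 2 - (t+1) = k + d + 1 := by omega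
    rw [h4, Nat.choose_succ_succ]
    calc (k+1) * ((t+d).choose t + (t+d).choose (t+1)) + (t+d) * (t+d).choose (t+1)
          + (t+1) * (t+d).choose (t+1)
        = (k+1) * ((t+d).choose t) + ((t+d).choose (t+1) * (t+1))
          + (k + (t+d) + 1) * ((t+d).choose (t+1)) := by ring
      _ = (k+1) * ((t+d).choose t) + ((t+d).choose t * d)
          + (k + (t+d) + 1) * ((t+d).choose (t+1)) := by rw [csr]
      _ = _ := by ring

lemma H_recur (m s : ℕ) (hs : 1 ≤ s) :
    (∑ k ∈ Finset.range (m+2), eulerian (m+1) k * ((m+1-k).choose s))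
      + s * ∑ k ∈ Finset.range (m+1), eulerian m k * ((m-k).choose s)
    = (m+1) * (∑ k ∈ Finset.range (m+1), eulerian m k * ((m-k).choose s))
      + (m+2-s) * ∑ k ∈ Finset.range (m+1), eulerian m k * ((m-k).choose (s-1)) := by
  obtain ⟨t, rfl⟩ : ∃ t, s = t + 1 := ⟨s - 1, by omega⟩
  simp only [Nat.add_sub_cancel]
  rw [Finset.sum_range_succ' (fun k => eulerian (m+1) k * ((m+1-k).choose (t+1)))]
  have h1 : ∀ j ∈ Finset.range (m+1),
      eulerian (m+1) (j+1) * ((m+1-(j+1)).choose (t+1))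
      = (j+1+1) * (eulerian m (j+1) * ((m+1-(j+1)).choose (t+1)))
        + (m-j) * (eulerian m j * ((m-j).choose (t+1))) := by
    intro j hj
    have e : m + 1 - (j+1) = m - j := by omega
    rw [e, eulerian]
    ring
  rw [Finset.sum_congr rfl h1, Finset.sum_add_distrib]
  have h2 : ∑ j ∈ Finset.range (m+1), (j+1+1) * (eulerian m (j+1) * ((m+1-(j+1)).choose (t+1)))
        + eulerian (m+1) 0 * ((m+1-0).choose (t+1))
      = ∑ k ∈ Finset.range (m+1), (k+1) * (eulerian m k * ((m+1-k).choose (t+1))) := by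
    have e2 : ∑ k ∈ Finset.range (m+2), (k+1) * (eulerian m k * ((m+1-k).choose (t+1)))
        = ∑ k ∈ Finset.range (m+1), (k+1) * (eulerian m k * ((m+1-k).choose (t+1))) := by
      rw [Finset.sum_range_succ, eulerian_of_lt m (m+1) (by omega)]
      simp
    rw [← e2, Finset.sum_range_succ' (fun k => (k+1) * (eulerian m k * ((m+1-k).choose (t+1))))]
    congr 1
    rw [eulerian_zero_left, eulerian_zero_left]
    ring
  have h3 : ∀ A B C D A' : ℕ, A + D = A' → A + B + D + C = A' + B + C := by
    intro A B C D A' h; omega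
  rw [h3 _ _ _ _ _ h2, Finset.mul_sum, Finset.mul_sum, Finset.mul_sum,
    ← Finset.sum_add_distrib, ← Finset.sum_add_distrib, ← Finset.sum_add_distrib]
  apply Finset.sum_congr rfl
  intro k hk
  have hk' : k ≤ m := by have := Finset.mem_range.mp hk; omega
  have key := choose_term m k (t+1) t hk' rfl
  calc (k+1) * (eulerian m k * ((m+1-k).choose (t+1)))
        + (m-k) * (eulerian m k * ((m-k).choose (t+1)))
        + (t+1) * (eulerian m k * ((m-k).choose (t+1)))
      = eulerian m k * ((k+1) * ((m+1-k).choose (t+1)) + (m-k) * ((m-k).choose (t+1))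
          + (t+1) * ((m-k).choose (t+1))) := by ring
    _ = eulerian m k * ((m+1) * ((m-k).choose (t+1)) + (m+2-(t+1)) * ((m-k).choose t)) := by
        rw [key]
    _ = _ := by ring

lemma H_high (m s : ℕ) (h : m < s) :
    ∑ k ∈ Finset.range (m+1), eulerian m k * ((m-k).choose s) = 0 := by
  apply Finset.sum_eq_zero
  intro k hk
  rw [Nat.choose_eq_zero_of_lt (by omega), mul_zero]

lemma H_eq : ∀ m s, s ≤ m →
    ∑ k ∈ Finset.range (m+1), eulerian m k * ((m-k).choose s)
      = (m-s).factorial * stirlingSecond (m+1) (m+1-s) := by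
  intro m
  induction m with
  | zero => intro s hs; interval_cases s; decide
  | succ m ih =>
    intro s hs
    cases s with
    | zero =>
      simp only [Nat.choose_zero_right, mul_one, Nat.sub_zero]
      rw [sum_eulerian, stirling_self]
      ring
    | succ t =>
      have hrec := H_recur m (t+1) (by omega)
      simp only [Nat.add_sub_cancel] at hrec
      rcases Nat.lt_or_ge t m with hlt | hge
      · obtain ⟨u, rfl⟩ : ∃ u, m = t + 1 + u := ⟨m - t - 1, by omega⟩
        have iv1 := ih (t+1) (by omega)
        have iv2 := ih t (by omega)
        have e1 : t + 1 + u - (t+1) = u := by omega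
        have e2 : t + 1 + u + 1 - (t+1) = u + 1 := by omega
        have e3 : t + 1 + u - t = u + 1 := by omega
        have e4 : t + 1 + u + 1 - t = u + 2 := by omega
        have e5 : t + 1 + u + 2 - (t+1) = u + 2 := by omega
        rw [e1, e2] at iv1
        rw [e3, e4] at iv2
        rw [iv1, iv2, e5] at hrec
        have e6 : t + 1 + u + 1 - (t + 1) = u + 1 := by omega
        have e7 : t + 1 + u + 1 + 1 - (t + 1) = u + 2 := by omega
        rw [e6, e7]
        have sdef : stirlingSecond (t + 1 + u + 1 + 1) (u + 2)
            = (u+2) * stirlingSecond (t+1+u+1) (u+2) + stirlingSecond (t+1+u+1) (u+1) := rfl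
        have final : (t+1+u+1) * (u.factorial * stirlingSecond (t+1+u+1) (u+1))
              + (u+2) * ((u+1).factorial * stirlingSecond (t+1+u+1) (u+2))
            = (u+1).factorial * stirlingSecond (t+1+u+1+1) (u+2)
              + (t+1) * (u.factorial * stirlingSecond (t+1+u+1) (u+1)) := by
          rw [sdef, Nat.factorial_succ]
          ring
        apply Nat.add_right_cancel (m := (t+1) * (u.factorial * stirlingSecond (t+1+u+1) (u+1)))
        rw [hrec, final]
      · have : t = m := by omega
        subst this
        rw [H_high t (t+1) (by omega)] at hrec
        have iv := ih t (by omega)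
        have e1 : t - t = 0 := by omega
        have e2 : t + 1 - t = 1 := by omega
        have e3 : t + 2 - (t+1) = 1 := by omega
        rw [e1, e2] at iv
        rw [iv, e3] at hrec
        have e4 : t + 1 - (t + 1) = 0 := by omega
        have e5 : t + 1 + 1 - (t + 1) = 1 := by omega
        rw [e4, e5]
        have sdef : stirlingSecond (t + 1 + 1) 1
            = 1 * stirlingSecond (t+1) 1 + stirlingSecond (t+1) 0 := rfl
        have z : stirlingSecond (t+1) 0 = 0 := rfl
        rw [sdef, z]
        simp only [mul_zero, zero_add, add_zero, one_mul, mul_one] at hrec ⊢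
        rw [hrec]

theorem stmt_11 (n : ℕ) (hn : 2 ≤ n) (x : ℝ) :
    ∑ k ∈ Finset.range (n - 1),
        (eulerian (n - 1) k : ℝ) * x ^ (k + 1) * (x - 1) ^ (n - 1 - k) =
      ∑ k ∈ Finset.Icc 1 n,
        (-1 : ℝ) ^ (n - k) * (Nat.factorial (k - 1)) * stirlingSecond n k * x ^ k := by
  obtain ⟨m, rfl⟩ : ∃ m, n = m + 2 := ⟨n - 2, by omega⟩
  have hred : m + 2 - 1 = m + 1 := rfl
  rw [hred]
  have step1 : ∀ k ∈ Finset.range (m+1),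
      (eulerian (m+1) k : ℝ) * x ^ (k + 1) * (x - 1) ^ (m + 1 - k)
      = ∑ j ∈ Finset.Icc 1 (m+2), (eulerian (m+1) k : ℝ)
          * ((m+1-k).choose (m+2-j) : ℝ) * (-1) ^ (m+2-j) * x ^ j := by
    intro k hk
    have hk' : k ≤ m := by have := Finset.mem_range.mp hk; omega
    calc (eulerian (m+1) k : ℝ) * x ^ (k + 1) * (x - 1) ^ (m + 1 - k)
        = ∑ j ∈ Finset.Icc (k+1) (m+2), (eulerian (m+1) k : ℝ)
            * ((m+1-k).choose (m+2-j) : ℝ) * (-1) ^ (m+2-j) * x ^ j := by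
          rw [show x - 1 = x + (-1) from by ring, add_pow, Finset.mul_sum]
          apply Finset.sum_nbij' (i := fun i => k + 1 + i) (j := fun j => j - (k+1))
          · intro a ha
            simp only [Finset.mem_range, Finset.mem_Icc] at *
            omega
          · intro a ha
            simp only [Finset.mem_range, Finset.mem_Icc] at *
            omega
          · intro a ha; omega
          · intro a ha
            simp only [Finset.mem_Icc] at ha
            omega
          · intro a ha
            simp only [Finset.mem_range] at ha
            have ha' : a ≤ m + 1 - k := by omega
            have c1 : m + 2 - (k + 1 + a) = m + 1 - k - a := by omega
            have c2 : (m+1-k).choose (m+1-k-a) = (m+1-k).choose a := Nat.choose_symm ha'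
            rw [c1, c2, pow_add]
            ring
      _ = ∑ j ∈ Finset.Icc 1 (m+2), (eulerian (m+1) k : ℝ)
            * ((m+1-k).choose (m+2-j) : ℝ) * (-1) ^ (m+2-j) * x ^ j := by
          apply Finset.sum_subset
          · intro j hj
            simp only [Finset.mem_Icc] at *
            omega
          · intro j hj hj'
            simp only [Finset.mem_Icc] at hj hj'
            have : m + 1 - k < m + 2 - j := by omega
            rw [Nat.choose_eq_zero_of_lt this]
            push_cast
            ring
  rw [Finset.sum_congr rfl step1, Finset.sum_comm]
  apply Finset.sum_congr rfl
  intro j hj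
  simp only [Finset.mem_Icc] at hj
  have key : ∀ k ∈ Finset.range (m+1),
      (eulerian (m+1) k : ℝ) * ((m+1-k).choose (m+2-j) : ℝ) * (-1) ^ (m+2-j) * x ^ j
      = ((eulerian (m+1) k * ((m+1-k).choose (m+2-j)) : ℕ) : ℝ) * ((-1) ^ (m+2-j) * x ^ j) := by
    intro k hk
    push_cast
    ring
  rw [Finset.sum_congr rfl key, ← Finset.sum_mul, ← Nat.cast_sum]
  have hsum : ∑ k ∈ Finset.range (m+1), eulerian (m+1) k * ((m+1-k).choose (m+2-j))
      = (j-1).factorial * stirlingSecond (m+2) j := by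
    have ext : ∑ k ∈ Finset.range (m+2), eulerian (m+1) k * ((m+1-k).choose (m+2-j))
        = ∑ k ∈ Finset.range (m+1), eulerian (m+1) k * ((m+1-k).choose (m+2-j)) := by
      rw [Finset.sum_range_succ, eulerian_of_le (m+1) (m+1) (by omega) le_rfl]
      simp
    rw [← ext, H_eq (m+1) (m+2-j) (by omega)]
    have c1 : m + 1 - (m + 2 - j) = j - 1 := by omega
    have c2 : m + 1 + 1 - (m + 2 - j) = j := by omega
    rw [c1, c2]
  rw [hsum]
  push_cast
  ring
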